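/- arXiv:2406.14743 — 2 statements merged into one kernel-verified Lean document; each statement's English description precedes it below -/
import Mathlib

section
/- Adversarial lower bound (Appendix C): Let n be a positive integer divisible by 6, and consider binary online classification with utility ψ(C) = min{C_{00}, C_{11}}, where for label sequence y ∈ {0,1}^n and prediction sequence ŷ ∈ {0,1}^n, C_{00} = (1/n)Σ_t (1−y_t)(1−ŷ_t) and C_{11} = (1/n)Σ_t y_t ŷ_t. Consider two conditional-probability sequences: η^{(1)}_t = 2/3 for all t, and η^{(2)}_t = 2/3 for t ≤ n/2 and 1/3 for t > n/2. In scenario s ∈ {1,2}, labels y_1,...,y_n are independent with P(y_t = 1) = η^{(s)}_t. Let an online algorithm produce, in scenario s, predictions ŷ^{(s)}_t ∈ {0,1} that are measurable functions of (y_1,...,y_{t−1}) and of auxiliary randomness independent of the labels, with ŷ^{(1)}_t = ŷ^{(2)}_t (as such functions) for all t ≤ n/2. Define ALG_s = E_s[min{C_{00},C_{11}}] for the algorithm's predictions and OPT_s = max over fixed prediction sequences ŷ ∈ {0,1}^n of E_s[min{C_{00},C_{11}}]. Then max_{s∈{1,2}} (OPT_s − ALG_s) ≥ 1/36 − 1/(2√n).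 -/
open MeasureTheory

/-- Conditional probabilities of the two adversarial scenarios: in scenario `s = 0` all
rounds have `η_t = 2/3`; in scenario `s = 1` the first half has `η_t = 2/3` and the
second half `η_t = 1/3`. -/
noncomputable def advEta (n : ℕ) (s : Fin 2) (t : ℕ) : ENNReal :=
  if s = 0 ∨ t < n / 2 then 2 / 3 else 1 / 3

theorem advEta_le_one (n : ℕ) (s : Fin 2) (t : ℕ) : advEta n s t ≤ 1 := by
  unfold advEta
  split
  · exact ENNReal.div_le_of_le_mul (by norm_num)
  · exact ENNReal.div_le_of_le_mul (by norm_num)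

/-- The distribution of the label sequence in scenario `s`: labels are independent with
`P(y_t = 1) = η^{(s)}_t`. -/
noncomputable def advLabelMeasure (n : ℕ) (s : Fin 2) : Measure (Fin n → Bool) :=
  Measure.pi fun t : Fin n => (PMF.bernoulli (advEta n s t).toNNReal
    (by simpa using ENNReal.toNNReal_mono ENNReal.one_ne_top (advEta_le_one n s t))).toMeasure

/-- The utility `ψ(C) = min{C₀₀, C₁₁}` of a label sequence `y` and a prediction
sequence `ŷ`, where `C₀₀` is the fraction of true negatives and `C₁₁` the fraction of
true positives. -/
noncomputable def advUtil (n : ℕ) (y yhat : Fin n → Bool) : ℝ :=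
  min ((1 / (n : ℝ)) * ∑ t, (if y t = false ∧ yhat t = false then (1 : ℝ) else 0))
      ((1 / (n : ℝ)) * ∑ t, (if y t = true ∧ yhat t = true then (1 : ℝ) else 0))



open MeasureTheory Finset

section Core

variable {n : ℕ}

/-- Sum over boolean sequences of a product factorizes. -/
lemma adv_sum_prod (β : Fin n → Bool → ℝ) :
    ∑ y : Fin n → Bool, ∏ i, β i (y i) = ∏ i, (β i true + β i false) := by
  classical
  calc ∑ y : Fin n → Bool, ∏ i, β i (y i)
      = ∑ y ∈ Fintype.piFinset (fun _ : Fin n => (univ : Finset Bool)), ∏ i, β i (y i) := by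
        rw [Fintype.piFinset_univ]
    _ = ∏ i, ∑ b : Bool, β i b := (Finset.prod_univ_sum _ _).symm
    _ = ∏ i, (β i true + β i false) := Finset.prod_congr rfl fun i _ => Fintype.sum_bool _

/-- The pairing/splitting identity at one coordinate. -/
lemma adv_core (β : Fin n → Bool → ℝ) (t : Fin n) (G : (Fin n → Bool) → ℝ)
    (hG : ∀ y b, G (Function.update y t b) = G y) :
    ∑ y : Fin n → Bool, (∏ i, β i (y i)) * G y
      = (β t true + β t false) *
        ∑ y : Fin n → Bool,
          (if y t = false then (∏ i ∈ Finset.univ.erase t, β i (y i)) * G y else 0) := by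
  classical
  have hsplit : ∀ y : Fin n → Bool, (∏ i, β i (y i)) = β t (y t) * ∏ i ∈ univ.erase t, β i (y i) :=
    fun y => (Finset.mul_prod_erase univ _ (mem_univ t)).symm
  have hinv : Function.Involutive (fun y : Fin n → Bool => Function.update y t (!(y t))) := by
    intro y
    funext j
    by_cases hj : j = t
    · subst hj; simp
    · simp [Function.update_of_ne hj]
  set σ : Equiv.Perm (Fin n → Bool) := hinv.toPerm _ with hσdef
  have hσ : ∀ y, σ y = Function.update y t (!(y t)) := fun y => rfl
  have h1 : ∀ y : Fin n → Bool,
      (∏ i, β i (y i)) * G y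
        = (if y t = false then (β t false) * ((∏ i ∈ univ.erase t, β i (y i)) * G y) else 0)
          + (if y t = true then (∏ i, β i (y i)) * G y else 0) := by
    intro y
    cases hyt : y t
    · rw [if_pos rfl, if_neg (by simp [hyt]), add_zero, hsplit y, hyt, mul_assoc]
    · rw [if_neg (by simp [hyt]), if_pos rfl, zero_add]
  rw [Finset.sum_congr rfl fun y _ => h1 y, Finset.sum_add_distrib]
  have h2 : ∑ y : Fin n → Bool, (if y t = true then (∏ i, β i (y i)) * G y else 0)
      = ∑ y : Fin n → Bool,
          (if y t = false then (β t true) * ((∏ i ∈ univ.erase t, β i (y i)) * G y) else 0) := by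
    rw [← Equiv.sum_comp σ (fun y => if y t = true then (∏ i, β i (y i)) * G y else 0)]
    refine Finset.sum_congr rfl fun y _ => ?_

    have hGσ : G (σ y) = G y := by rw [hσ]; exact hG y _
    have hpσ : (∏ i ∈ univ.erase t, β i ((σ y) i)) = ∏ i ∈ univ.erase t, β i (y i) :=
      Finset.prod_congr rfl fun i hi => by
        rw [hσ, Function.update_of_ne (mem_erase.1 hi).1]
    cases hyt : y t with
    | false =>
      have h3 : (σ y) t = true := by rw [hσ]; simp [hyt]
      rw [if_pos h3, if_pos rfl, hsplit (σ y), h3, hpσ, hGσ, mul_assoc]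
    | true =>
      have h3 : (σ y) t = false := by rw [hσ]; simp [hyt]
      rw [if_neg (by simp [h3]), if_neg (by simp [hyt])]
  rw [h2]
  rw [Finset.mul_sum, ← Finset.sum_add_distrib]
  refine Finset.sum_congr rfl fun y _ => ?_
  by_cases hyt : y t = false
  · rw [if_pos hyt, if_pos hyt, if_pos hyt]; ring
  · rw [if_neg hyt, if_neg hyt, if_neg hyt]; ring

/-- Conditioning on coordinate `t`. -/
lemma adv_cond (β : Fin n → Bool → ℝ) (t : Fin n) (hsum : β t true + β t false = 1)
    (g : Bool → ℝ) (G : (Fin n → Bool) → ℝ)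
    (hG : ∀ y b, G (Function.update y t b) = G y) :
    ∑ y : Fin n → Bool, (∏ i, β i (y i)) * (g (y t) * G y)
      = (β t true * g true + β t false * g false) *
        ∑ y : Fin n → Bool, (∏ i, β i (y i)) * G y := by
  classical
  set β' : Fin n → Bool → ℝ := Function.update β t (fun b => β t b * g b) with hβ'
  have hβ't : β' t = fun b => β t b * g b := Function.update_self t _ β
  have hβ'i : ∀ i : Fin n, i ≠ t → β' i = β i := fun i hi => Function.update_of_ne hi _ β
  have hprod : ∀ y : Fin n → Bool,
      (∏ i, β' i (y i)) = (∏ i, β i (y i)) * g (y t) := by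
    intro y
    rw [← Finset.mul_prod_erase univ (fun i => β' i (y i)) (mem_univ t),
        ← Finset.mul_prod_erase univ (fun i => β i (y i)) (mem_univ t)]
    rw [Finset.prod_congr rfl fun i hi => by rw [hβ'i i (mem_erase.1 hi).1]]
    rw [hβ't]
    ring
  have herase : ∀ y : Fin n → Bool,
      (∏ i ∈ univ.erase t, β' i (y i)) = ∏ i ∈ univ.erase t, β i (y i) :=
    fun y => Finset.prod_congr rfl fun i hi => by rw [hβ'i i (mem_erase.1 hi).1]
  have e1 := adv_core β' t G hG
  have e2 := adv_core β t G hG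
  simp_rw [hprod, herase] at e1
  rw [hβ't] at e1
  simp only at e1
  calc ∑ y : Fin n → Bool, (∏ i, β i (y i)) * (g (y t) * G y)
      = ∑ y : Fin n → Bool, (∏ i, β i (y i)) * g (y t) * G y :=
        Finset.sum_congr rfl fun y _ => by ring
    _ = (β t true * g true + β t false * g false) *
        ∑ y : Fin n → Bool, (if y t = false then (∏ i ∈ univ.erase t, β i (y i)) * G y else 0) := e1
    _ = (β t true * g true + β t false * g false) *
        ∑ y : Fin n → Bool, (∏ i, β i (y i)) * G y := by
        rw [e2, hsum, one_mul]

end Core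
section Weights

open scoped ENNReal

/-- Real-valued per-round weights of the label distribution. -/
noncomputable def advB (n : ℕ) (s : Fin 2) (t : Fin n) : Bool → ℝ := fun b =>
  if b then (advEta n s t).toReal else 1 - (advEta n s t).toReal

/-- Weight (probability) of a full label sequence. -/
noncomputable def advW (n : ℕ) (s : Fin 2) (y : Fin n → Bool) : ℝ :=
  ∏ t, advB n s t (y t)

lemma advEta_toReal (n : ℕ) (s : Fin 2) (t : ℕ) :
    (advEta n s t).toReal = if s = 0 ∨ t < n / 2 then (2/3 : ℝ) else 1/3 := by
  unfold advEta
  split <;> simp [ENNReal.toReal_div]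

lemma advEta_toReal_nonneg (n : ℕ) (s : Fin 2) (t : ℕ) : 0 ≤ (advEta n s t).toReal := by
  rw [advEta_toReal]; split <;> norm_num

lemma advEta_toReal_le_one (n : ℕ) (s : Fin 2) (t : ℕ) : (advEta n s t).toReal ≤ 1 := by
  rw [advEta_toReal]; split <;> norm_num

lemma advEta_var (n : ℕ) (s : Fin 2) (t : ℕ) :
    (advEta n s t).toReal * (1 - (advEta n s t).toReal) = 2/9 := by
  rw [advEta_toReal]; split <;> norm_num

lemma advB_sum_one (n : ℕ) (s : Fin 2) (t : Fin n) : advB n s t true + advB n s t false = 1 := by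
  simp [advB]

lemma advB_nonneg (n : ℕ) (s : Fin 2) (t : Fin n) (b : Bool) : 0 ≤ advB n s t b := by
  cases b <;> simp [advB, advEta_toReal_nonneg, advEta_toReal_le_one]

lemma advW_nonneg (n : ℕ) (s : Fin 2) (y : Fin n → Bool) : 0 ≤ advW n s y :=
  Finset.prod_nonneg fun t _ => advB_nonneg n s t (y t)

lemma advW_sum_one (n : ℕ) (s : Fin 2) : ∑ y : Fin n → Bool, advW n s y = 1 := by
  unfold advW
  rw [adv_sum_prod]
  simp [advB_sum_one]

lemma advLabelMeasure_singleton (n : ℕ) (s : Fin 2) (y : Fin n → Bool) :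
    ((advLabelMeasure n s) {y}).toReal = advW n s y := by
  rw [advLabelMeasure, ← Set.univ_pi_singleton y, Measure.pi_pi, ENNReal.toReal_prod]
  refine Finset.prod_congr rfl fun t _ => ?_
  rw [PMF.toMeasure_apply_singleton _ _ (measurableSet_singleton _)]
  erw [PMF.bernoulli_apply]
  cases hyt : y t
  · simp only [Bool.cond_false]
    rw [ENNReal.coe_toReal, NNReal.coe_sub (by simpa using ENNReal.toNNReal_mono ENNReal.one_ne_top (advEta_le_one n s t))]
    simp [advB, hyt, ENNReal.coe_toNNReal_eq_toReal]
  · simp [advB, hyt, ENNReal.coe_toNNReal_eq_toReal]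

instance advLabelMeasure_prob (n : ℕ) (s : Fin 2) : IsProbabilityMeasure (advLabelMeasure n s) := by
  unfold advLabelMeasure
  infer_instance

lemma adv_integral (n : ℕ) (s : Fin 2) (f : (Fin n → Bool) → ℝ) :
    ∫ y, f y ∂(advLabelMeasure n s) = ∑ y : Fin n → Bool, advW n s y * f y := by
  rw [MeasureTheory.integral_fintype (Integrable.of_finite)]
  exact Finset.sum_congr rfl fun y _ => by rw [measureReal_def, advLabelMeasure_singleton, smul_eq_mul]

lemma adv_integral_prod (n : ℕ) (s : Fin 2) {Ωa : Type*} [MeasurableSpace Ωa]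
    (ν : Measure Ωa) [IsProbabilityMeasure ν]
    (F : (Fin n → Bool) × Ωa → ℝ) (hF : Measurable F) (hbd : ∀ p, |F p| ≤ 1) :
    ∫ p, F p ∂((advLabelMeasure n s).prod ν) = ∑ y : Fin n → Bool, advW n s y * ∫ ω, F (y, ω) ∂ν := by
  have hInt : Integrable F ((advLabelMeasure n s).prod ν) :=
    ⟨hF.aestronglyMeasurable,
      HasFiniteIntegral.of_bounded (C := 1)
        (Filter.Eventually.of_forall fun p => by rw [Real.norm_eq_abs]; exact hbd p)⟩
  rw [MeasureTheory.integral_prod _ hInt,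
      MeasureTheory.integral_fintype (Integrable.of_finite)]
  exact Finset.sum_congr rfl fun y _ => by rw [measureReal_def, advLabelMeasure_singleton, smul_eq_mul]

/-- Changing the weights on a set of coordinates on which `G` does not depend. -/
lemma adv_swap {n : ℕ} (s : Finset (Fin n)) :
    ∀ (β β' : Fin n → Bool → ℝ),
    (∀ i, i ∉ s → β i = β' i) →
    (∀ i, β i true + β i false = 1) → (∀ i, β' i true + β' i false = 1) →
    ∀ (G : (Fin n → Bool) → ℝ),
    (∀ t ∈ s, ∀ y b, G (Function.update y t b) = G y) →
    ∑ y : Fin n → Bool, (∏ i, β i (y i)) * G y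
      = ∑ y : Fin n → Bool, (∏ i, β' i (y i)) * G y := by
  classical
  induction s using Finset.induction_on with
  | empty =>
      intro β β' hββ' _ _ G _
      have : β = β' := funext fun i => hββ' i (Finset.notMem_empty i)
      rw [this]
  | @insert a s ha IH =>
      intro β β' hββ' h1 h1' G hG
      set β'' : Fin n → Bool → ℝ := Function.update β a (β' a) with hβ''def
      have hβ''a : β'' a = β' a := Function.update_self a _ β
      have hβ''i : ∀ i, i ≠ a → β'' i = β i := fun i hi => Function.update_of_ne hi _ β
      have hGa : ∀ y b, G (Function.update y a b) = G y := hG a (Finset.mem_insert_self a s)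
      have step1 : ∑ y : Fin n → Bool, (∏ i, β i (y i)) * G y
          = ∑ y : Fin n → Bool, (∏ i, β'' i (y i)) * G y := by
        rw [adv_core β a G hGa, adv_core β'' a G hGa, h1 a, hβ''a, h1' a, one_mul, one_mul]
        refine Finset.sum_congr rfl fun y _ => ?_
        by_cases hya : y a = false
        · rw [if_pos hya, if_pos hya]
          congr 1
          exact (Finset.prod_congr rfl fun i hi => by
            rw [hβ''i i (Finset.mem_erase.1 hi).1]).symm
        · rw [if_neg hya, if_neg hya]
      rw [step1]
      refine IH β'' β' (fun i hi => ?_) (fun i => ?_) h1' G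
        (fun t ht => hG t (Finset.mem_insert_of_mem ht))
      · by_cases hia : i = a
        · subst hia; exact hβ''a
        · rw [hβ''i i hia]
          exact hββ' i (by simp [hia, hi])
      · by_cases hia : i = a
        · subst hia; rw [hβ''a]; exact h1' i
        · rw [hβ''i i hia]; exact h1 i

end Weights
section Helpers

lemma adv_cond_w (n : ℕ) (s : Fin 2) (t : Fin n) (g : Bool → ℝ) (G : (Fin n → Bool) → ℝ)
    (hG : ∀ y b, G (Function.update y t b) = G y) :
    ∑ y : Fin n → Bool, advW n s y * (g (y t) * G y)
      = ((advEta n s t).toReal * g true + (1 - (advEta n s t).toReal) * g false) *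
        ∑ y : Fin n → Bool, advW n s y * G y := by
  have h := adv_cond (advB n s) t (advB_sum_one n s t) g G hG
  simpa [advW, advB] using h

lemma adv_exp_coord (n : ℕ) (s : Fin 2) (t : Fin n) (g : Bool → ℝ) :
    ∑ y : Fin n → Bool, advW n s y * g (y t)
      = (advEta n s t).toReal * g true + (1 - (advEta n s t).toReal) * g false := by
  have h := adv_cond_w n s t g (fun _ => 1) (fun _ _ => rfl)
  simpa [advW_sum_one n s] using h

lemma adv_absD_le (n : ℕ) (hn : 0 < n) (s : Fin 2) :
    ∑ y : Fin n → Bool, advW n s y *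
        |(1/(n:ℝ)) * ∑ t, ((if y t = true then (1:ℝ) else 0) - (advEta n s t).toReal)|
      ≤ 1 / Real.sqrt n := by
  classical
  set d : Fin n → Bool → ℝ := fun t b => (if b = true then (1:ℝ) else 0) - (advEta n s t).toReal
    with hd
  set D : (Fin n → Bool) → ℝ := fun y => (1/(n:ℝ)) * ∑ t, d t (y t) with hD
  have hdt : ∀ t : Fin n, d t true = 1 - (advEta n s t).toReal := by
    intro t; simp [hd]
  have hdf : ∀ t : Fin n, d t false = -(advEta n s t).toReal := by
    intro t; simp [hd]
  have hM : ∀ t u : Fin n, (∑ y : Fin n → Bool, advW n s y * (d t (y t) * d u (y u)))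
      = if t = u then 2/9 else 0 := by
    intro t u
    by_cases htu : t = u
    · subst htu
      rw [if_pos rfl]
      have h := adv_cond_w n s t (fun b => d t b * d t b) (fun _ => 1) (fun _ _ => rfl)
      simp only [mul_one] at h
      rw [h, advW_sum_one n s, mul_one, hdt, hdf]
      linear_combination advEta_var n s t
    · rw [if_neg htu]
      have hG : ∀ (y : Fin n → Bool) (b : Bool),
          (fun y : Fin n → Bool => d u (y u)) (Function.update y t b)
            = (fun y : Fin n → Bool => d u (y u)) y := by
        intro y b
        show d u (Function.update y t b u) = d u (y u)
        rw [Function.update_of_ne (Ne.symm htu)]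
      have h := adv_cond_w n s t (d t) (fun y => d u (y u)) hG
      rw [h, hdt, hdf]
      have : (advEta n s t).toReal * (1 - (advEta n s t).toReal)
          + (1 - (advEta n s t).toReal) * -(advEta n s t).toReal = 0 := by ring
      rw [this, zero_mul]
  have hexp : ∀ y : Fin n → Bool, (D y)^2
      = (1/(n:ℝ))^2 * ∑ t : Fin n, ∑ u : Fin n, d t (y t) * d u (y u) := by
    intro y
    rw [hD]
    simp only
    rw [mul_pow]
    congr 1
    rw [sq, Finset.sum_mul_sum]
  have hywD : ∀ y : Fin n → Bool, advW n s y * (D y)^2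
      = ∑ t : Fin n, ∑ u : Fin n, (1/(n:ℝ))^2 * (advW n s y * (d t (y t) * d u (y u))) := by
    intro y
    rw [hexp y, Finset.mul_sum, Finset.mul_sum]
    refine Finset.sum_congr rfl fun t _ => ?_
    rw [Finset.mul_sum, Finset.mul_sum]
    exact Finset.sum_congr rfl fun u _ => by ring
  have hD2 : ∑ y : Fin n → Bool, advW n s y * (D y)^2 = 2 / (9*n) := by
    calc ∑ y : Fin n → Bool, advW n s y * (D y)^2
        = ∑ y : Fin n → Bool, ∑ t : Fin n, ∑ u : Fin n,
            (1/(n:ℝ))^2 * (advW n s y * (d t (y t) * d u (y u))) :=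
          Finset.sum_congr rfl fun y _ => hywD y
      _ = ∑ t : Fin n, ∑ u : Fin n, ∑ y : Fin n → Bool,
            (1/(n:ℝ))^2 * (advW n s y * (d t (y t) * d u (y u))) := by
          rw [Finset.sum_comm]
          exact Finset.sum_congr rfl fun t _ => Finset.sum_comm
      _ = ∑ t : Fin n, ∑ u : Fin n,
            (1/(n:ℝ))^2 * ∑ y : Fin n → Bool, advW n s y * (d t (y t) * d u (y u)) := by
          refine Finset.sum_congr rfl fun t _ => Finset.sum_congr rfl fun u _ => ?_
          rw [Finset.mul_sum]
      _ = ∑ t : Fin n, (1/(n:ℝ))^2 * (2/9) := by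
          refine Finset.sum_congr rfl fun t _ => ?_
          rw [Finset.sum_eq_single t]
          · rw [hM t t, if_pos rfl]
          · intro u _ hut
            rw [hM t u, if_neg (Ne.symm hut), mul_zero]
          · intro h; exact absurd (Finset.mem_univ t) h
      _ = 2 / (9*n) := by
          rw [Finset.sum_const, Finset.card_univ, Fintype.card_fin]
          have hnpos : (0:ℝ) < n := by exact_mod_cast hn
          field_simp
          rw [nsmul_eq_mul]; field_simp
  have hCS : (∑ y : Fin n → Bool, advW n s y * |D y|)^2
      ≤ (∑ y : Fin n → Bool, advW n s y) * (∑ y : Fin n → Bool, advW n s y * (D y)^2) := by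
    have h := Finset.sum_mul_sq_le_sq_mul_sq Finset.univ
      (fun y : Fin n → Bool => Real.sqrt (advW n s y))
      (fun y : Fin n → Bool => Real.sqrt (advW n s y) * |D y|)
    calc (∑ y : Fin n → Bool, advW n s y * |D y|)^2
        = (∑ y : Fin n → Bool, Real.sqrt (advW n s y) * (Real.sqrt (advW n s y) * |D y|))^2 := by
          congr 1
          refine Finset.sum_congr rfl fun y _ => ?_
          rw [← mul_assoc, Real.mul_self_sqrt (advW_nonneg n s y)]
      _ ≤ (∑ y : Fin n → Bool, Real.sqrt (advW n s y) ^ 2) *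
          (∑ y : Fin n → Bool, (Real.sqrt (advW n s y) * |D y|)^2) := h
      _ = (∑ y : Fin n → Bool, advW n s y) * (∑ y : Fin n → Bool, advW n s y * (D y)^2) := by
          congr 1
          · exact Finset.sum_congr rfl fun y _ => Real.sq_sqrt (advW_nonneg n s y)
          · refine Finset.sum_congr rfl fun y _ => ?_
            rw [mul_pow, Real.sq_sqrt (advW_nonneg n s y), sq_abs]
  rw [advW_sum_one n s, one_mul, hD2] at hCS
  have hnonneg : 0 ≤ ∑ y : Fin n → Bool, advW n s y * |D y| :=
    Finset.sum_nonneg fun y _ => mul_nonneg (advW_nonneg n s y) (abs_nonneg _)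
  have hnpos : (0:ℝ) < n := by exact_mod_cast hn
  have h1n : (2:ℝ) / (9*n) ≤ 1/n := by
    rw [div_le_div_iff₀ (by positivity) hnpos]
    nlinarith
  have hfin : ∑ y : Fin n → Bool, advW n s y * |D y| ≤ Real.sqrt (1/n) := by
    rw [Real.le_sqrt hnonneg (by positivity)]
    exact le_trans hCS h1n
  calc ∑ y : Fin n → Bool, advW n s y * |D y| ≤ Real.sqrt (1/n) := hfin
    _ = 1 / Real.sqrt n := by rw [one_div, Real.sqrt_inv, one_div]

/-- Lower bound on the expected utility of a *fixed* prediction sequence, when the number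
of predicted negatives matches the expected number of positive labels. -/
lemma adv_opt_lower (n : ℕ) (hn : 0 < n) (s : Fin 2) (yhat : Fin n → Bool)
    (hbal : ∑ t : Fin n, (if yhat t = true then (0:ℝ) else 1)
        = ∑ t : Fin n, (advEta n s t).toReal) :
    (1/(2*(n:ℝ))) * (∑ t : Fin n, (if yhat t = true then (advEta n s t).toReal
        else 1 - (advEta n s t).toReal)) - 1 / (2 * Real.sqrt n)
      ≤ ∫ y, advUtil n y yhat ∂(advLabelMeasure n s) := by
  classical
  set X : (Fin n → Bool) → ℝ :=
    fun y => (1/(n:ℝ)) * ∑ t, (if y t = true ∧ yhat t = true then (1:ℝ) else 0) with hX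
  set Y : (Fin n → Bool) → ℝ :=
    fun y => (1/(n:ℝ)) * ∑ t, (if y t = false ∧ yhat t = false then (1:ℝ) else 0) with hY
  set D : (Fin n → Bool) → ℝ :=
    fun y => (1/(n:ℝ)) * ∑ t, ((if y t = true then (1:ℝ) else 0) - (advEta n s t).toReal) with hD
  have hXY : ∀ y, X y - Y y = D y := by
    intro y
    rw [hX, hY, hD]
    simp only
    rw [← mul_sub, ← Finset.sum_sub_distrib]
    congr 1
    have hsum : ∑ t : Fin n, ((if y t = true ∧ yhat t = true then (1:ℝ) else 0)
        - (if y t = false ∧ yhat t = false then (1:ℝ) else 0))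
        = ∑ t : Fin n, ((if y t = true then (1:ℝ) else 0)
            - (if yhat t = true then (0:ℝ) else 1)) := by
      refine Finset.sum_congr rfl fun t _ => ?_
      cases hyt : y t <;> cases hyh : yhat t <;> simp [hyt, hyh]
    rw [hsum, Finset.sum_sub_distrib, hbal, ← Finset.sum_sub_distrib]
  have hmin : ∀ y, advUtil n y yhat = (X y + Y y)/2 - |D y|/2 := by
    intro y
    rw [← hXY y]
    have h0 : advUtil n y yhat = min (Y y) (X y) := rfl
    rw [h0]
    rcases le_total (Y y) (X y) with h | h
    · rw [min_eq_left h, abs_of_nonneg (by linarith)]; ring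
    · rw [min_eq_right h, abs_of_nonpos (by linarith)]; ring
  rw [adv_integral]
  have hsplit : ∑ y : Fin n → Bool, advW n s y * advUtil n y yhat
      = (1/2) * (∑ y : Fin n → Bool, advW n s y * X y + ∑ y : Fin n → Bool, advW n s y * Y y)
        - (1/2) * ∑ y : Fin n → Bool, advW n s y * |D y| := by
    rw [← Finset.sum_add_distrib, Finset.mul_sum, Finset.mul_sum, ← Finset.sum_sub_distrib]
    refine Finset.sum_congr rfl fun y _ => ?_
    rw [hmin y]
    ring
  have hEX : ∑ y : Fin n → Bool, advW n s y * X y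
      = (1/(n:ℝ)) * ∑ t : Fin n, (advEta n s t).toReal * (if yhat t = true then (1:ℝ) else 0) := by
    have h1 : ∀ y : Fin n → Bool, advW n s y * X y
        = ∑ t : Fin n, (1/(n:ℝ)) * (advW n s y * (if y t = true ∧ yhat t = true then (1:ℝ) else 0)) := by
      intro y
      rw [hX]
      simp only
      rw [Finset.mul_sum, Finset.mul_sum]
      exact Finset.sum_congr rfl fun t _ => by ring
    calc ∑ y : Fin n → Bool, advW n s y * X y
        = ∑ t : Fin n, ∑ y : Fin n → Bool,
            (1/(n:ℝ)) * (advW n s y * (if y t = true ∧ yhat t = true then (1:ℝ) else 0)) := by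
          rw [← Finset.sum_comm]
          exact Finset.sum_congr rfl fun y _ => h1 y
      _ = ∑ t : Fin n, (1/(n:ℝ)) * ((advEta n s t).toReal * (if yhat t = true then (1:ℝ) else 0)) := by
          refine Finset.sum_congr rfl fun t _ => ?_
          rw [← Finset.mul_sum]
          congr 1
          have h := adv_exp_coord n s t (fun b => if b = true ∧ yhat t = true then (1:ℝ) else 0)
          simp only at h
          rw [h]
          cases hyh : yhat t <;> simp [hyh]
      _ = (1/(n:ℝ)) * ∑ t : Fin n, (advEta n s t).toReal * (if yhat t = true then (1:ℝ) else 0) := by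
          rw [Finset.mul_sum]
  have hEY : ∑ y : Fin n → Bool, advW n s y * Y y
      = (1/(n:ℝ)) * ∑ t : Fin n, (1 - (advEta n s t).toReal) * (if yhat t = false then (1:ℝ) else 0) := by
    have h1 : ∀ y : Fin n → Bool, advW n s y * Y y
        = ∑ t : Fin n, (1/(n:ℝ)) * (advW n s y * (if y t = false ∧ yhat t = false then (1:ℝ) else 0)) := by
      intro y
      rw [hY]
      simp only
      rw [Finset.mul_sum, Finset.mul_sum]
      exact Finset.sum_congr rfl fun t _ => by ring
    calc ∑ y : Fin n → Bool, advW n s y * Y y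
        = ∑ t : Fin n, ∑ y : Fin n → Bool,
            (1/(n:ℝ)) * (advW n s y * (if y t = false ∧ yhat t = false then (1:ℝ) else 0)) := by
          rw [← Finset.sum_comm]
          exact Finset.sum_congr rfl fun y _ => h1 y
      _ = ∑ t : Fin n, (1/(n:ℝ)) * ((1 - (advEta n s t).toReal) * (if yhat t = false then (1:ℝ) else 0)) := by
          refine Finset.sum_congr rfl fun t _ => ?_
          rw [← Finset.mul_sum]
          congr 1
          have h := adv_exp_coord n s t (fun b => if b = false ∧ yhat t = false then (1:ℝ) else 0)
          simp only at h
          rw [h]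
          cases hyh : yhat t <;> simp [hyh]
      _ = (1/(n:ℝ)) * ∑ t : Fin n, (1 - (advEta n s t).toReal) * (if yhat t = false then (1:ℝ) else 0) := by
          rw [Finset.mul_sum]
  have habs := adv_absD_le n hn s
  have habs' : ∑ y : Fin n → Bool, advW n s y * |D y| ≤ 1 / Real.sqrt n := by
    rw [hD]; exact habs
  have hcomb : ∑ t : Fin n, (advEta n s t).toReal * (if yhat t = true then (1:ℝ) else 0)
      + ∑ t : Fin n, (1 - (advEta n s t).toReal) * (if yhat t = false then (1:ℝ) else 0)
      = ∑ t : Fin n, (if yhat t = true then (advEta n s t).toReal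
          else 1 - (advEta n s t).toReal) := by
    rw [← Finset.sum_add_distrib]
    refine Finset.sum_congr rfl fun t _ => ?_
    cases hyh : yhat t <;> simp [hyh]
  rw [hsplit, hEX, hEY]
  have hrw : (1/(n:ℝ)) * ∑ t : Fin n, (advEta n s t).toReal * (if yhat t = true then (1:ℝ) else 0)
      + (1/(n:ℝ)) * ∑ t : Fin n, (1 - (advEta n s t).toReal) * (if yhat t = false then (1:ℝ) else 0)
      = (1/(n:ℝ)) * ∑ t : Fin n, (if yhat t = true then (advEta n s t).toReal
          else 1 - (advEta n s t).toReal) := by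
    rw [← mul_add, hcomb]
  rw [hrw]
  have hsq : (0:ℝ) ≤ 1 / Real.sqrt n := by positivity
  have hr1 : (1/(2*(n:ℝ))) * (∑ t : Fin n, (if yhat t = true then (advEta n s t).toReal
      else 1 - (advEta n s t).toReal))
      = 1/2 * ((1/(n:ℝ)) * ∑ t : Fin n, (if yhat t = true then (advEta n s t).toReal
          else 1 - (advEta n s t).toReal)) := by ring
  have hr2 : 1 / (2 * Real.sqrt n) = 1/2 * (1 / Real.sqrt n) := by ring
  rw [hr1, hr2]
  linarith [habs']

end Helpers
section ALG

lemma adv_count (n k : ℕ) (hk : k ≤ n) :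
    ∑ t : Fin n, (if (t:ℕ) < k then (1:ℝ) else 0) = k := by
  rw [Fin.sum_univ_eq_sum_range (fun i => if i < k then (1:ℝ) else 0) n, Finset.sum_boole]
  have h : (Finset.range n).filter (fun i => i < k) = Finset.range k := by
    ext i
    simp only [Finset.mem_filter, Finset.mem_range]
    omega
  rw [h, Finset.card_range]

lemma adv_card_filter (n k : ℕ) (hk : k ≤ n) :
    (((Finset.univ : Finset (Fin n)).filter (fun t : Fin n => (t:ℕ) < k)).card : ℝ) = k := by
  rw [← Finset.sum_boole]
  exact adv_count n k hk

lemma adv_sum_ite (n k : ℕ) (hk : k ≤ n) (a b : ℝ) :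
    ∑ t : Fin n, (if (t:ℕ) < k then a else b) = k * a + ((n:ℝ) - k) * b := by
  have h1 : ∀ t : Fin n, (if (t:ℕ) < k then a else b)
      = (if (t:ℕ) < k then (1:ℝ) else 0) * a + (1 - (if (t:ℕ) < k then (1:ℝ) else 0)) * b := by
    intro t; split <;> ring
  rw [Finset.sum_congr rfl fun t _ => h1 t, Finset.sum_add_distrib, ← Finset.sum_mul,
      ← Finset.sum_mul, adv_count n k hk, Finset.sum_sub_distrib, Finset.sum_const,
      adv_count n k hk, Finset.card_univ, Fintype.card_fin]
  simp only [nsmul_eq_mul, mul_one]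

lemma adv_avg_01 (n : ℕ) (f : Fin n → ℝ) (h : ∀ t, 0 ≤ f t ∧ f t ≤ 1) :
    0 ≤ (1/(n:ℝ)) * ∑ t, f t ∧ (1/(n:ℝ)) * ∑ t, f t ≤ 1 := by
  rcases Nat.eq_zero_or_pos n with hn | hn
  · subst hn
    simp
  have hnpos : (0:ℝ) < n := by exact_mod_cast hn
  constructor
  · exact mul_nonneg (by positivity) (Finset.sum_nonneg fun t _ => (h t).1)
  · have hsum : ∑ t, f t ≤ (n:ℝ) := by
      calc ∑ t, f t ≤ ∑ _t : Fin n, (1:ℝ) := Finset.sum_le_sum fun t _ => (h t).2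
        _ = n := by simp
    rw [one_div]
    calc (n:ℝ)⁻¹ * ∑ t, f t ≤ (n:ℝ)⁻¹ * n := by
          exact mul_le_mul_of_nonneg_left hsum (by positivity)
      _ = 1 := by field_simp

/-- Upper bounds on the expected utility of an online algorithm in terms of its
per-round marginal prediction probabilities. -/
lemma adv_alg_le (n : ℕ) (hn : 0 < n) {Ωa : Type*} [MeasurableSpace Ωa] (ν : Measure Ωa)
    [IsProbabilityMeasure ν] (s : Fin 2) (B : Fin n → (Fin n → Bool) → Ωa → Bool)
    (hBmeas : ∀ t, Measurable (fun p : (Fin n → Bool) × Ωa => B t p.1 p.2))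
    (hBadapt : ∀ t yseq yseq' a,
      (∀ i : Fin n, i < t → yseq i = yseq' i) → B t yseq a = B t yseq' a) :
    (∫ p, advUtil n p.1 (fun t => B t p.1 p.2) ∂((advLabelMeasure n s).prod ν)
        ≤ (1/(n:ℝ)) * ∑ t : Fin n, (advEta n s t).toReal *
            (∑ y : Fin n → Bool, advW n s y * ∫ ω, (if B t y ω = true then (1:ℝ) else 0) ∂ν))
    ∧ (∫ p, advUtil n p.1 (fun t => B t p.1 p.2) ∂((advLabelMeasure n s).prod ν)
        ≤ (1/(n:ℝ)) * ∑ t : Fin n, (1 - (advEta n s t).toReal) *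
            (1 - ∑ y : Fin n → Bool, advW n s y * ∫ ω, (if B t y ω = true then (1:ℝ) else 0) ∂ν)) := by
  classical
  set G : Fin n → (Fin n → Bool) → ℝ :=
    fun t y => ∫ ω, (if B t y ω = true then (1:ℝ) else 0) ∂ν with hGdef
  have hint : ∀ {f : Ωa → ℝ}, Measurable f → (∀ ω, |f ω| ≤ 1) → Integrable f ν := by
    intro f hf hb
    exact ⟨hf.aestronglyMeasurable,
      HasFiniteIntegral.of_bounded (C := 1)
        (Filter.Eventually.of_forall fun ω => by rw [Real.norm_eq_abs]; exact hb ω)⟩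
  have hmB : ∀ t (y : Fin n → Bool), Measurable fun ω => B t y ω :=
    fun t y => (hBmeas t).comp measurable_prodMk_left
  have hmInd : ∀ (t : Fin n) (y : Fin n → Bool) (g : Bool → ℝ),
      Measurable fun ω => g (B t y ω) :=
    fun t y g => (measurable_of_countable g).comp (hmB t y)
  have hIndInt : ∀ (t : Fin n) (y : Fin n → Bool) (g : Bool → ℝ), (∀ b, |g b| ≤ 1) →
      Integrable (fun ω => g (B t y ω)) ν :=
    fun t y g hg => hint (hmInd t y g) fun ω => hg _
  have hG01 : ∀ t y, 0 ≤ G t y ∧ G t y ≤ 1 := by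
    intro t y
    constructor
    · exact integral_nonneg fun ω => by positivity
    · calc G t y ≤ ∫ _ω, (1:ℝ) ∂ν := by
            refine integral_mono (hIndInt t y (fun b => if b = true then (1:ℝ) else 0)
              (fun b => by cases b <;> norm_num)) (integrable_const 1) fun ω => ?_
            split <;> norm_num
        _ = 1 := by simp
  have hGinv : ∀ (t t' : Fin n), ¬(t' < t) → ∀ y b, G t (Function.update y t' b) = G t y := by
    intro t t' ht' y b
    simp only [hGdef]
    congr 1
    funext ω
    congr 1
    rw [hBadapt t (Function.update y t' b) y ω fun i hi =>
      Function.update_of_ne (fun hit' => ht' (by rw [← hit']; exact hi)) _ _]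
  set F11 : (Fin n → Bool) × Ωa → ℝ :=
    fun p => (1/(n:ℝ)) * ∑ t, (if p.1 t = true ∧ B t p.1 p.2 = true then (1:ℝ) else 0) with hF11
  set F00 : (Fin n → Bool) × Ωa → ℝ :=
    fun p => (1/(n:ℝ)) * ∑ t, (if p.1 t = false ∧ B t p.1 p.2 = false then (1:ℝ) else 0) with hF00
  have hmP11 : ∀ t : Fin n, Measurable
      (fun p : (Fin n → Bool) × Ωa => (if p.1 t = true ∧ B t p.1 p.2 = true then (1:ℝ) else 0)) := by
    intro t
    have hpair : Measurable (fun p : (Fin n → Bool) × Ωa => (p.1 t, B t p.1 p.2)) :=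
      ((measurable_pi_apply t).comp measurable_fst).prodMk (hBmeas t)
    exact (measurable_of_countable
      (fun q : Bool × Bool => if q.1 = true ∧ q.2 = true then (1:ℝ) else 0)).comp hpair
  have hmP00 : ∀ t : Fin n, Measurable
      (fun p : (Fin n → Bool) × Ωa => (if p.1 t = false ∧ B t p.1 p.2 = false then (1:ℝ) else 0)) := by
    intro t
    have hpair : Measurable (fun p : (Fin n → Bool) × Ωa => (p.1 t, B t p.1 p.2)) :=
      ((measurable_pi_apply t).comp measurable_fst).prodMk (hBmeas t)
    exact (measurable_of_countable
      (fun q : Bool × Bool => if q.1 = false ∧ q.2 = false then (1:ℝ) else 0)).comp hpair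
  have hmF11 : Measurable F11 :=
    (Finset.measurable_sum Finset.univ fun t _ => hmP11 t).const_mul _
  have hmF00 : Measurable F00 :=
    (Finset.measurable_sum Finset.univ fun t _ => hmP00 t).const_mul _
  have hb11 : ∀ p, 0 ≤ F11 p ∧ F11 p ≤ 1 :=
    fun p => adv_avg_01 n _ fun t => by constructor <;> split <;> norm_num
  have hb00 : ∀ p, 0 ≤ F00 p ∧ F00 p ≤ 1 :=
    fun p => adv_avg_01 n _ fun t => by constructor <;> split <;> norm_num
  have hUeq : (fun p : (Fin n → Bool) × Ωa => advUtil n p.1 (fun t => B t p.1 p.2))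
      = fun p => min (F00 p) (F11 p) := rfl
  have hIntF11 : Integrable F11 ((advLabelMeasure n s).prod ν) :=
    ⟨hmF11.aestronglyMeasurable, HasFiniteIntegral.of_bounded (C := 1)
      (Filter.Eventually.of_forall fun p => by
        rw [Real.norm_eq_abs, abs_le]; exact ⟨by linarith [(hb11 p).1], (hb11 p).2⟩)⟩
  have hIntF00 : Integrable F00 ((advLabelMeasure n s).prod ν) :=
    ⟨hmF00.aestronglyMeasurable, HasFiniteIntegral.of_bounded (C := 1)
      (Filter.Eventually.of_forall fun p => by
        rw [Real.norm_eq_abs, abs_le]; exact ⟨by linarith [(hb00 p).1], (hb00 p).2⟩)⟩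
  have hIntU : Integrable (fun p : (Fin n → Bool) × Ωa => advUtil n p.1 (fun t => B t p.1 p.2))
      ((advLabelMeasure n s).prod ν) := by
    rw [hUeq]
    exact ⟨(hmF00.min hmF11).aestronglyMeasurable, HasFiniteIntegral.of_bounded (C := 1)
      (Filter.Eventually.of_forall fun p => by
        rw [Real.norm_eq_abs, abs_le]
        constructor
        · have := (hb00 p).1; have := (hb11 p).1
          have hm : min (F00 p) (F11 p) = F00 p ∨ min (F00 p) (F11 p) = F11 p := min_choice _ _
          rcases hm with hm | hm <;> rw [hm] <;> linarith
        · exact le_trans (min_le_left _ _) (hb00 p).2)⟩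
  -- value of ∫ F11
  have hval11 : ∫ p, F11 p ∂((advLabelMeasure n s).prod ν)
      = (1/(n:ℝ)) * ∑ t : Fin n, (advEta n s t).toReal * (∑ y : Fin n → Bool, advW n s y * G t y) := by
    rw [adv_integral_prod n s ν F11 hmF11
      (fun p => by rw [abs_le]; exact ⟨by linarith [(hb11 p).1], (hb11 p).2⟩)]
    have hinner : ∀ y : Fin n → Bool, ∫ ω, F11 (y, ω) ∂ν
        = (1/(n:ℝ)) * ∑ t : Fin n, (if y t = true then (1:ℝ) else 0) * G t y := by
      intro y
      rw [hF11]
      simp only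
      rw [MeasureTheory.integral_const_mul]
      congr 1
      rw [MeasureTheory.integral_finset_sum Finset.univ (fun t _ => by
        refine hint ?_ (fun ω => by split <;> norm_num)
        have hpair : Measurable (fun ω : Ωa => B t y ω) := hmB t y
        exact (measurable_of_countable (fun b : Bool =>
          if y t = true ∧ b = true then (1:ℝ) else 0)).comp hpair)]
      refine Finset.sum_congr rfl fun t _ => ?_
      by_cases hyt : y t = true
      · have h9 : (fun ω => if y t = true ∧ B t y ω = true then (1:ℝ) else 0)
            = fun ω => if B t y ω = true then (1:ℝ) else 0 := by
          funext ω; simp [hyt]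
        rw [h9]
        simp [hyt, hGdef]
      · have h9 : (fun ω => if y t = true ∧ B t y ω = true then (1:ℝ) else 0) = fun _ω => 0 := by
          funext ω; simp [hyt]
        rw [h9, integral_zero]
        simp [hyt]
    rw [Finset.sum_congr rfl fun y _ => by rw [hinner y]]
    have hswap : ∑ y : Fin n → Bool, advW n s y *
        ((1/(n:ℝ)) * ∑ t : Fin n, (if y t = true then (1:ℝ) else 0) * G t y)
        = (1/(n:ℝ)) * ∑ t : Fin n, ∑ y : Fin n → Bool,
            advW n s y * ((if y t = true then (1:ℝ) else 0) * G t y) := by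
      calc ∑ y : Fin n → Bool, advW n s y *
          ((1/(n:ℝ)) * ∑ t : Fin n, (if y t = true then (1:ℝ) else 0) * G t y)
          = ∑ y : Fin n → Bool, ∑ t : Fin n,
              (1/(n:ℝ)) * (advW n s y * ((if y t = true then (1:ℝ) else 0) * G t y)) := by
            refine Finset.sum_congr rfl fun y _ => ?_
            rw [Finset.mul_sum, Finset.mul_sum]
            exact Finset.sum_congr rfl fun t _ => by ring
        _ = ∑ t : Fin n, ∑ y : Fin n → Bool,
              (1/(n:ℝ)) * (advW n s y * ((if y t = true then (1:ℝ) else 0) * G t y)) :=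
            Finset.sum_comm
        _ = (1/(n:ℝ)) * ∑ t : Fin n, ∑ y : Fin n → Bool,
              advW n s y * ((if y t = true then (1:ℝ) else 0) * G t y) := by
            rw [Finset.mul_sum]
            exact Finset.sum_congr rfl fun t _ => by rw [Finset.mul_sum]
    rw [hswap]
    congr 1
    refine Finset.sum_congr rfl fun t _ => ?_
    rw [adv_cond_w n s t (fun b => if b = true then (1:ℝ) else 0) (G t)
      (fun y b => hGinv t t (lt_irrefl t) y b)]
    simp
  -- value of ∫ F00
  have hval00 : ∫ p, F00 p ∂((advLabelMeasure n s).prod ν)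
      = (1/(n:ℝ)) * ∑ t : Fin n, (1 - (advEta n s t).toReal) *
          (1 - ∑ y : Fin n → Bool, advW n s y * G t y) := by
    rw [adv_integral_prod n s ν F00 hmF00
      (fun p => by rw [abs_le]; exact ⟨by linarith [(hb00 p).1], (hb00 p).2⟩)]
    have hinner : ∀ y : Fin n → Bool, ∫ ω, F00 (y, ω) ∂ν
        = (1/(n:ℝ)) * ∑ t : Fin n, (if y t = false then (1:ℝ) else 0) * (1 - G t y) := by
      intro y
      rw [hF00]
      simp only
      rw [MeasureTheory.integral_const_mul]
      congr 1
      rw [MeasureTheory.integral_finset_sum Finset.univ (fun t _ => by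
        refine hint ?_ (fun ω => by split <;> norm_num)
        have hpair : Measurable (fun ω : Ωa => B t y ω) := hmB t y
        exact (measurable_of_countable (fun b : Bool =>
          if y t = false ∧ b = false then (1:ℝ) else 0)).comp hpair)]
      refine Finset.sum_congr rfl fun t _ => ?_
      by_cases hyt : y t = false
      · have heq1 : (fun ω => if y t = false ∧ B t y ω = false then (1:ℝ) else 0)
            = fun ω => 1 - (if B t y ω = true then (1:ℝ) else 0) := by
          funext ω; cases hB : B t y ω <;> simp [hyt, hB]
        rw [heq1, integral_sub (integrable_const 1)
          (hIndInt t y (fun b => if b = true then (1:ℝ) else 0) (fun b => by cases b <;> norm_num))]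
        simp [hyt, hGdef]
      · have heq1 : (fun ω => if y t = false ∧ B t y ω = false then (1:ℝ) else 0) = fun _ω => 0 := by
          funext ω; simp [hyt]
        rw [heq1, integral_zero]
        simp [hyt]
    rw [Finset.sum_congr rfl fun y _ => by rw [hinner y]]
    have hswap : ∑ y : Fin n → Bool, advW n s y *
        ((1/(n:ℝ)) * ∑ t : Fin n, (if y t = false then (1:ℝ) else 0) * (1 - G t y))
        = (1/(n:ℝ)) * ∑ t : Fin n, ∑ y : Fin n → Bool,
            advW n s y * ((if y t = false then (1:ℝ) else 0) * (1 - G t y)) := by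
      calc ∑ y : Fin n → Bool, advW n s y *
          ((1/(n:ℝ)) * ∑ t : Fin n, (if y t = false then (1:ℝ) else 0) * (1 - G t y))
          = ∑ y : Fin n → Bool, ∑ t : Fin n,
              (1/(n:ℝ)) * (advW n s y * ((if y t = false then (1:ℝ) else 0) * (1 - G t y))) := by
            refine Finset.sum_congr rfl fun y _ => ?_
            rw [Finset.mul_sum, Finset.mul_sum]
            exact Finset.sum_congr rfl fun t _ => by ring
        _ = ∑ t : Fin n, ∑ y : Fin n → Bool,
              (1/(n:ℝ)) * (advW n s y * ((if y t = false then (1:ℝ) else 0) * (1 - G t y))) :=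
            Finset.sum_comm
        _ = (1/(n:ℝ)) * ∑ t : Fin n, ∑ y : Fin n → Bool,
              advW n s y * ((if y t = false then (1:ℝ) else 0) * (1 - G t y)) := by
            rw [Finset.mul_sum]
            exact Finset.sum_congr rfl fun t _ => by rw [Finset.mul_sum]
    rw [hswap]
    congr 1
    refine Finset.sum_congr rfl fun t _ => ?_
    have hGinv' : ∀ y b, (fun y => 1 - G t y) (Function.update y t b) = (fun y => 1 - G t y) y := by
      intro y b
      simp only
      rw [hGinv t t (lt_irrefl t) y b]
    rw [adv_cond_w n s t (fun b => if b = false then (1:ℝ) else 0) (fun y => 1 - G t y) hGinv']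
    have hsub : ∑ y : Fin n → Bool, advW n s y * (1 - G t y)
        = 1 - ∑ y : Fin n → Bool, advW n s y * G t y := by
      have h' : ∑ y : Fin n → Bool, advW n s y * (1 - G t y)
          = (∑ y : Fin n → Bool, advW n s y) - ∑ y : Fin n → Bool, advW n s y * G t y := by
        rw [← Finset.sum_sub_distrib]
        exact Finset.sum_congr rfl fun y _ => by ring
      rw [h', advW_sum_one n s]
    rw [hsub]
    simp
  constructor
  · calc ∫ p, advUtil n p.1 (fun t => B t p.1 p.2) ∂((advLabelMeasure n s).prod ν)
        ≤ ∫ p, F11 p ∂((advLabelMeasure n s).prod ν) := by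
          refine integral_mono hIntU hIntF11 fun p => ?_
          show advUtil n p.1 (fun t => B t p.1 p.2) ≤ F11 p
          exact min_le_right _ _
      _ = _ := hval11
  · calc ∫ p, advUtil n p.1 (fun t => B t p.1 p.2) ∂((advLabelMeasure n s).prod ν)
        ≤ ∫ p, F00 p ∂((advLabelMeasure n s).prod ν) := by
          refine integral_mono hIntU hIntF00 fun p => ?_
          show advUtil n p.1 (fun t => B t p.1 p.2) ≤ F00 p
          exact min_le_left _ _
      _ = _ := hval00

end ALG

/-- Adversarial lower bound: for `n` divisible by 6, any online algorithm (predictions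
measurable in past labels and in auxiliary randomness independent of the labels, and
identical in both scenarios during the first half) suffers, in one of the two scenarios,
a regret of at least `1/36 - 1/(2√n)` for the utility `min{C₀₀, C₁₁}` against the best
fixed prediction sequence in expectation. -/
theorem adversarial_lower_bound
    (n : ℕ) (hn : 0 < n) (h6 : 6 ∣ n)
    {Ωa : Type*} [MeasurableSpace Ωa] (ν : Measure Ωa) [IsProbabilityMeasure ν]
    (A : Fin 2 → Fin n → (Fin n → Bool) → Ωa → Bool)
    (hmeas : ∀ s t, Measurable (fun p : (Fin n → Bool) × Ωa => A s t p.1 p.2))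
    (hadapt : ∀ s t yseq yseq' a,
      (∀ i : Fin n, i < t → yseq i = yseq' i) → A s t yseq a = A s t yseq' a)
    (hsame : ∀ t : Fin n, (t : ℕ) < n / 2 → A 0 t = A 1 t)
    (ALG : Fin 2 → ℝ)
    (hALG : ∀ s, ALG s =
      ∫ p, advUtil n p.1 (fun t => A s t p.1 p.2) ∂((advLabelMeasure n s).prod ν))
    (OPT : Fin 2 → ℝ)
    (hOPT : ∀ s, OPT s =
      ⨆ yhat : Fin n → Bool, ∫ y, advUtil n y yhat ∂(advLabelMeasure n s)) :
    1 / 36 - 1 / (2 * Real.sqrt n) ≤ max (OPT 0 - ALG 0) (OPT 1 - ALG 1) := by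
  classical
  obtain ⟨m, hm⟩ := h6
  have hm1 : 1 ≤ m := by omega
  have hn2 : n / 2 = 3 * m := by omega
  have hnpos : (0:ℝ) < n := by exact_mod_cast hn
  have hnne : (n:ℝ) ≠ 0 := ne_of_gt hnpos
  have hmR : (n:ℝ) = 6 * (m:ℝ) := by rw [hm]; push_cast; ring
  have hmpos : (0:ℝ) < (m:ℝ) := by exact_mod_cast hm1
  have hmne : (m:ℝ) ≠ 0 := ne_of_gt hmpos
  have h10 : ¬((1 : Fin 2) = 0) := by decide
  have hEta0 : ∀ t : ℕ, (advEta n 0 t).toReal = 2/3 := by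
    intro t; rw [advEta_toReal]; simp
  have hEta1 : ∀ t : ℕ, (advEta n 1 t).toReal = if t < 3*m then (2/3:ℝ) else 1/3 := by
    intro t; rw [advEta_toReal, hn2]; simp [h10]
  set P : Fin 2 → Fin n → ℝ := fun s t =>
    ∑ y : Fin n → Bool, advW n s y * ∫ ω, (if A s t y ω = true then (1:ℝ) else 0) ∂ν with hPdef
  have hmA : ∀ (s : Fin 2) (t : Fin n) (y : Fin n → Bool),
      Measurable (fun ω => if A s t y ω = true then (1:ℝ) else 0) := by
    intro s t y
    exact (measurable_of_countable (fun b : Bool => if b = true then (1:ℝ) else 0)).comp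
      ((hmeas s t).comp measurable_prodMk_left)
  have hIntA : ∀ (s : Fin 2) (t : Fin n) (y : Fin n → Bool),
      Integrable (fun ω => if A s t y ω = true then (1:ℝ) else 0) ν := by
    intro s t y
    exact ⟨(hmA s t y).aestronglyMeasurable, HasFiniteIntegral.of_bounded (C := 1)
      (Filter.Eventually.of_forall fun ω => by
        rw [Real.norm_eq_abs, abs_le]; constructor <;> split <;> norm_num)⟩
  have hP01 : ∀ s t, 0 ≤ P s t ∧ P s t ≤ 1 := by
    intro s t
    constructor
    · exact Finset.sum_nonneg fun y _ => mul_nonneg (advW_nonneg n s y)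
        (integral_nonneg fun ω => by positivity)
    · calc P s t ≤ ∑ y : Fin n → Bool, advW n s y * 1 := by
            refine Finset.sum_le_sum fun y _ => ?_
            refine mul_le_mul_of_nonneg_left ?_ (advW_nonneg n s y)
            calc ∫ ω, (if A s t y ω = true then (1:ℝ) else 0) ∂ν
                ≤ ∫ _ω, (1:ℝ) ∂ν := integral_mono (hIntA s t y) (integrable_const 1)
                  (fun ω => by split <;> norm_num)
              _ = 1 := by simp
        _ = ∑ y : Fin n → Bool, advW n s y :=
            Finset.sum_congr rfl fun y _ => mul_one _
        _ = 1 := advW_sum_one n s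
  have hPeq : ∀ t : Fin n, (t:ℕ) < 3*m → P 0 t = P 1 t := by
    intro t ht
    have hA : A 0 t = A 1 t := hsame t (by rw [hn2]; exact ht)
    simp only [hPdef]
    rw [hA]
    have hG : ∀ t' ∈ Finset.univ.filter (fun i : Fin n => ¬((i:ℕ) < 3*m)),
        ∀ (y : Fin n → Bool) (b : Bool),
          (fun y => ∫ ω, (if A 1 t y ω = true then (1:ℝ) else 0) ∂ν) (Function.update y t' b)
            = (fun y => ∫ ω, (if A 1 t y ω = true then (1:ℝ) else 0) ∂ν) y := by
      intro t' ht' y b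
      have ht'3 : ¬((t':ℕ) < 3*m) := (Finset.mem_filter.1 ht').2
      simp only
      congr 1
      funext ω
      congr 1
      rw [hadapt 1 t (Function.update y t' b) y ω fun i hi => ?_]
      refine Function.update_of_ne (fun hit' => ?_) _ _
      have hival : (i:ℕ) < (t:ℕ) := hi
      apply ht'3
      rw [← hit']
      omega
    have hββ' : ∀ i ∉ Finset.univ.filter (fun i : Fin n => ¬((i:ℕ) < 3*m)),
        advB n 0 i = advB n 1 i := by
      intro i hi
      have hi3 : (i:ℕ) < 3*m := by
        by_contra h
        exact hi (Finset.mem_filter.2 ⟨Finset.mem_univ i, h⟩)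
      have hEtaeq : advEta n 0 i = advEta n 1 i := by
        unfold advEta
        rw [if_pos (Or.inl rfl), if_pos (Or.inr (by rw [hn2]; exact hi3))]
      funext b
      simp [advB, hEtaeq]
    exact adv_swap (Finset.univ.filter (fun i : Fin n => ¬((i:ℕ) < 3*m)))
      (advB n 0) (advB n 1) hββ' (fun i => advB_sum_one n 0 i) (fun i => advB_sum_one n 1 i)
      (fun y => ∫ ω, (if A 1 t y ω = true then (1:ℝ) else 0) ∂ν) hG
  -- cardinality facts
  have hcard1R : (((Finset.univ.filter (fun t : Fin n => (t:ℕ) < 3*m)).card : ℕ) : ℝ)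
      = 3*(m:ℝ) := by
    have h := adv_card_filter n (3*m) (by omega)
    rw [h]; push_cast; ring
  have hcard1 : (Finset.univ.filter (fun t : Fin n => (t:ℕ) < 3*m)).card = 3*m := by
    exact_mod_cast hcard1R
  have hcardsum : (Finset.univ.filter (fun t : Fin n => (t:ℕ) < 3*m)).card
      + (Finset.univ.filter (fun t : Fin n => ¬((t:ℕ) < 3*m))).card = n := by
    rw [Finset.card_filter_add_card_filter_not]
    simp
  have hcard2 : (Finset.univ.filter (fun t : Fin n => ¬((t:ℕ) < 3*m))).card = 3*m := by omega
  have hcard2R : (((Finset.univ.filter (fun t : Fin n => ¬((t:ℕ) < 3*m))).card : ℕ) : ℝ)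
      = 3*(m:ℝ) := by rw [hcard2]; push_cast; ring
  -- key scalars
  set pv : ℝ := (∑ t ∈ Finset.univ.filter (fun t : Fin n => (t:ℕ) < 3*m), P 1 t) / (n:ℝ)
    with hpv
  set qv : ℝ := (∑ t ∈ Finset.univ.filter (fun t : Fin n => ¬((t:ℕ) < 3*m)), P 1 t) / (n:ℝ)
    with hqv
  set rv : ℝ := (∑ t ∈ Finset.univ.filter (fun t : Fin n => ¬((t:ℕ) < 3*m)), P 0 t) / (n:ℝ)
    with hrv
  -- ALG bounds
  have hA0 : ALG 0 ≤ 1/3 - 1/3*pv - 1/3*rv := by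
    rw [hALG 0]
    refine le_trans (adv_alg_le n hn ν 0 (A 0) (hmeas 0) (hadapt 0)).2 (le_of_eq ?_)
    have e2 : ∀ t : Fin n, (1 - (advEta n 0 t).toReal) * (1 - P 0 t) = 1/3 - 1/3 * P 0 t := by
      intro t; rw [hEta0]; ring
    have esplit : ∑ t : Fin n, P 0 t
        = (∑ t ∈ Finset.univ.filter (fun t : Fin n => (t:ℕ) < 3*m), P 1 t)
          + ∑ t ∈ Finset.univ.filter (fun t : Fin n => ¬((t:ℕ) < 3*m)), P 0 t := by
      rw [← Finset.sum_filter_add_sum_filter_not Finset.univ (fun t : Fin n => (t:ℕ) < 3*m) (P 0)]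
      congr 1
      exact Finset.sum_congr rfl fun t ht => hPeq t (Finset.mem_filter.1 ht).2
    rw [Finset.sum_congr rfl fun t _ => e2 t, Finset.sum_sub_distrib, ← Finset.mul_sum, esplit,
        Finset.sum_const, Finset.card_univ, Fintype.card_fin, hpv, hrv]
    simp only [nsmul_eq_mul]
    field_simp
    ring
  have hA1a : ALG 1 ≤ 2/3*pv + 1/3*qv := by
    rw [hALG 1]
    refine le_trans (adv_alg_le n hn ν 1 (A 1) (hmeas 1) (hadapt 1)).1 (le_of_eq ?_)
    have e : ∑ t : Fin n, (advEta n 1 t).toReal * P 1 t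
        = 2/3 * (∑ t ∈ Finset.univ.filter (fun t : Fin n => (t:ℕ) < 3*m), P 1 t)
          + 1/3 * ∑ t ∈ Finset.univ.filter (fun t : Fin n => ¬((t:ℕ) < 3*m)), P 1 t := by
      rw [← Finset.sum_filter_add_sum_filter_not Finset.univ (fun t : Fin n => (t:ℕ) < 3*m)
        (fun t => (advEta n 1 t).toReal * P 1 t)]
      congr 1
      · rw [Finset.mul_sum]
        refine Finset.sum_congr rfl fun t ht => ?_
        rw [hEta1, if_pos (Finset.mem_filter.1 ht).2]
      · rw [Finset.mul_sum]
        refine Finset.sum_congr rfl fun t ht => ?_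
        rw [hEta1, if_neg (Finset.mem_filter.1 ht).2]
    rw [e, hpv, hqv]
    ring
  have hA1b : ALG 1 ≤ 1/3*(1/2 - pv) + 2/3*(1/2 - qv) := by
    rw [hALG 1]
    refine le_trans (adv_alg_le n hn ν 1 (A 1) (hmeas 1) (hadapt 1)).2 (le_of_eq ?_)
    have e : ∑ t : Fin n, (1 - (advEta n 1 t).toReal) * (1 - P 1 t)
        = 1/3 * (3*(m:ℝ) - ∑ t ∈ Finset.univ.filter (fun t : Fin n => (t:ℕ) < 3*m), P 1 t)
          + 2/3 * (3*(m:ℝ)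
            - ∑ t ∈ Finset.univ.filter (fun t : Fin n => ¬((t:ℕ) < 3*m)), P 1 t) := by
      rw [← Finset.sum_filter_add_sum_filter_not Finset.univ (fun t : Fin n => (t:ℕ) < 3*m)
        (fun t => (1 - (advEta n 1 t).toReal) * (1 - P 1 t))]
      congr 1
      · have e1 : ∀ t ∈ Finset.univ.filter (fun t : Fin n => (t:ℕ) < 3*m),
            (1 - (advEta n 1 t).toReal) * (1 - P 1 t) = 1/3 - 1/3 * P 1 t := by
          intro t ht
          rw [hEta1, if_pos (Finset.mem_filter.1 ht).2]
          ring
        rw [Finset.sum_congr rfl e1, Finset.sum_sub_distrib, ← Finset.mul_sum,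
            Finset.sum_const, hcard1, mul_sub]
        push_cast
        ring
      · have e1 : ∀ t ∈ Finset.univ.filter (fun t : Fin n => ¬((t:ℕ) < 3*m)),
            (1 - (advEta n 1 t).toReal) * (1 - P 1 t) = 2/3 - 2/3 * P 1 t := by
          intro t ht
          rw [hEta1, if_neg (Finset.mem_filter.1 ht).2]
          ring
        rw [Finset.sum_congr rfl e1, Finset.sum_sub_distrib, ← Finset.mul_sum,
            Finset.sum_const, hcard2, mul_sub]
        push_cast
        ring
    rw [e, hpv, hqv, hmR]
    field_simp
    ring
  have hrv0 : 0 ≤ rv := by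
    rw [hrv]
    exact div_nonneg (Finset.sum_nonneg fun t _ => (hP01 0 t).1) (le_of_lt hnpos)
  -- OPT lower bounds
  have hUtil01 : ∀ (y yhat : Fin n → Bool), advUtil n y yhat ≤ 1 := by
    intro y yhat
    exact le_trans (min_le_left _ _)
      ((adv_avg_01 n _ fun t => by constructor <;> split <;> norm_num).2)
  have hbddA : ∀ s : Fin 2, BddAbove (Set.range fun yhat : Fin n → Bool =>
      ∫ y, advUtil n y yhat ∂(advLabelMeasure n s)) := by
    intro s
    refine ⟨1, ?_⟩
    rintro x ⟨yhat, rfl⟩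
    calc ∫ y, advUtil n y yhat ∂(advLabelMeasure n s)
        ≤ ∫ _y, (1:ℝ) ∂(advLabelMeasure n s) :=
          integral_mono (Integrable.of_finite) (integrable_const 1) (fun y => hUtil01 y yhat)
      _ = 1 := by simp
  have hOPTge : ∀ (s : Fin 2) (yhat : Fin n → Bool),
      ∫ y, advUtil n y yhat ∂(advLabelMeasure n s) ≤ OPT s := by
    intro s yhat
    rw [hOPT s]
    exact le_ciSup (hbddA s) yhat
  set yhat0 : Fin n → Bool := fun t => decide ((t:ℕ) < 2*m) with hyhat0
  set yhat1 : Fin n → Bool := fun t => decide ((t:ℕ) < 3*m) with hyhat1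
  have hOPT0 : 2/9 - 1/(2*Real.sqrt n) ≤ OPT 0 := by
    have hbal0 : ∑ t : Fin n, (if yhat0 t = true then (0:ℝ) else 1)
        = ∑ t : Fin n, (advEta n 0 t).toReal := by
      have l : ∑ t : Fin n, (if yhat0 t = true then (0:ℝ) else 1)
          = ∑ t : Fin n, (if (t:ℕ) < 2*m then (0:ℝ) else 1) :=
        Finset.sum_congr rfl fun t _ => by simp [hyhat0]
      have r : ∑ t : Fin n, (advEta n 0 t).toReal = ∑ _t : Fin n, (2/3 : ℝ) :=
        Finset.sum_congr rfl fun t _ => hEta0 t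
      rw [l, r, adv_sum_ite n (2*m) (by omega) 0 1, Finset.sum_const, Finset.card_univ,
        Fintype.card_fin]
      push_cast [hm]
      ring
    have h0val : (1/(2*(n:ℝ))) * (∑ t : Fin n, (if yhat0 t = true then (advEta n 0 t).toReal
        else 1 - (advEta n 0 t).toReal)) = 2/9 := by
      have l : ∑ t : Fin n, (if yhat0 t = true then (advEta n 0 t).toReal
          else 1 - (advEta n 0 t).toReal)
          = ∑ t : Fin n, (if (t:ℕ) < 2*m then (2/3:ℝ) else 1/3) := by
        refine Finset.sum_congr rfl fun t _ => ?_
        by_cases h : (t:ℕ) < 2*m <;> simp [hyhat0, h, hEta0] <;> norm_num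
      rw [l, adv_sum_ite n (2*m) (by omega) (2/3) (1/3)]
      push_cast [hm]
      field_simp
      ring
    have h := adv_opt_lower n hn 0 yhat0 hbal0
    rw [h0val] at h
    exact le_trans h (hOPTge 0 yhat0)
  have hOPT1 : 1/3 - 1/(2*Real.sqrt n) ≤ OPT 1 := by
    have hbal1 : ∑ t : Fin n, (if yhat1 t = true then (0:ℝ) else 1)
        = ∑ t : Fin n, (advEta n 1 t).toReal := by
      have l : ∑ t : Fin n, (if yhat1 t = true then (0:ℝ) else 1)
          = ∑ t : Fin n, (if (t:ℕ) < 3*m then (0:ℝ) else 1) :=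
        Finset.sum_congr rfl fun t _ => by simp [hyhat1]
      have r : ∑ t : Fin n, (advEta n 1 t).toReal
          = ∑ t : Fin n, (if (t:ℕ) < 3*m then (2/3:ℝ) else 1/3) :=
        Finset.sum_congr rfl fun t _ => hEta1 t
      rw [l, r, adv_sum_ite n (3*m) (by omega) 0 1,
        adv_sum_ite n (3*m) (by omega) (2/3) (1/3)]
      push_cast [hm]
      ring
    have h1val : (1/(2*(n:ℝ))) * (∑ t : Fin n, (if yhat1 t = true then (advEta n 1 t).toReal
        else 1 - (advEta n 1 t).toReal)) = 1/3 := by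
      have l : ∑ t : Fin n, (if yhat1 t = true then (advEta n 1 t).toReal
          else 1 - (advEta n 1 t).toReal) = ∑ _t : Fin n, (2/3:ℝ) := by
        refine Finset.sum_congr rfl fun t _ => ?_
        by_cases h : (t:ℕ) < 3*m <;> simp [hyhat1, h, hEta1] <;> norm_num
      rw [l, Finset.sum_const, Finset.card_univ, Fintype.card_fin]
      push_cast [hm]
      field_simp
      ring
    have h := adv_opt_lower n hn 1 yhat1 hbal1
    rw [h1val] at h
    exact le_trans h (hOPTge 1 yhat1)
  -- endgame
  rcases le_or_gt (5/12 : ℝ) pv with hp | hp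
  · have hkey : 1/36 - 1/(2*Real.sqrt n) ≤ OPT 0 - ALG 0 := by linarith
    exact le_trans hkey (le_max_left _ _)
  · have hkey : 1/36 - 1/(2*Real.sqrt n) ≤ OPT 1 - ALG 1 := by linarith
    exact le_trans hkey (le_max_right _ _)
end

section
/- Nice-sequence lemma (Lemma in Appendix E): Let y₁,...,y_n be i.i.d. random vectors with values in {0,1}^m, let p*_k = P(y_{1,k} = 1) for k = 1,...,m, and let γ* = min_k p*_k > 0. Let n₀ be a positive integer dividing n with n₀² ≥ n. Then with probability at least 1 − m·n₀·e^{−γ*²·n₀/2}, the sequence is (n₀, γ*/4)-nice, i.e., for every t with n₀ < t ≤ n and every k ∈ {1,...,m}, the running average satisfies (1/t)·Σ_{i=1}^t y_{i,k} ≥ γ*/4. -/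
open MeasureTheory ProbabilityTheory

lemma bernoulli_mgf_bound {p t : ℝ} (hp0 : 0 ≤ p) (hp1 : p ≤ 1) (ht : t ≤ 0) :
    1 - p + p * Real.exp t ≤ Real.exp (t * p + t ^ 2 / 8) := by
  set d : ℝ → ℝ := fun u => 1 - p + p * Real.exp u with hd_def
  have hd : ∀ u, 0 < d u := by
    intro u
    rcases eq_or_lt_of_le hp1 with h | h
    · subst h
      simpa [hd_def] using Real.exp_pos u
    · have h1 : 0 ≤ p * Real.exp u := mul_nonneg hp0 (Real.exp_pos u).le
      simp only [hd_def]; nlinarith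
  have hd' : ∀ u, HasDerivAt d (p * Real.exp u) u := fun u =>
    ((Real.hasDerivAt_exp u).const_mul p).const_add (1 - p)
  set q : ℝ → ℝ := fun u => p * Real.exp u / d u with hq_def
  have hq' : ∀ u, HasDerivAt q
      ((p * Real.exp u * d u - p * Real.exp u * (p * Real.exp u)) / (d u) ^ 2) u := fun u =>
    ((Real.hasDerivAt_exp u).const_mul p).div (hd' u) (hd u).ne'
  set g : ℝ → ℝ := fun u => q u - p - u / 4 with hg_def
  have hg' : ∀ u, HasDerivAt g
      ((p * Real.exp u * d u - p * Real.exp u * (p * Real.exp u)) / (d u) ^ 2 - 1 / 4) u := by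
    intro u
    have h1 : HasDerivAt (fun u : ℝ => u / 4) (1 / 4) u := (hasDerivAt_id u).div_const 4
    exact ((hq' u).sub_const p).sub h1
  have hg_nonpos : ∀ u,
      (p * Real.exp u * d u - p * Real.exp u * (p * Real.exp u)) / (d u) ^ 2 - 1 / 4 ≤ 0 := by
    intro u
    rw [sub_nonpos, div_le_iff₀ (pow_pos (hd u) 2)]
    have ha : 0 ≤ p * Real.exp u := mul_nonneg hp0 (Real.exp_pos u).le
    have hc : 0 ≤ 1 - p := by linarith
    have hsq : 0 ≤ ((1 - p) - p * Real.exp u) ^ 2 := sq_nonneg _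
    simp only [hd_def]
    nlinarith
  have hgdiff : Differentiable ℝ g := fun u => (hg' u).differentiableAt
  have hganti : AntitoneOn g (Set.Iic 0) := by
    refine antitoneOn_of_deriv_nonpos (convex_Iic 0) hgdiff.continuous.continuousOn
      (fun x _ => (hgdiff x).differentiableWithinAt) ?_
    intro x _
    rw [(hg' x).deriv]; exact hg_nonpos x
  have hg0 : g 0 = 0 := by
    have h1 : (1:ℝ) - p + p * Real.exp 0 = 1 := by simp
    simp only [hg_def, hq_def, hd_def, h1, Real.exp_zero]
    ring
  have hg_nonneg : ∀ u ≤ 0, 0 ≤ g u := by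
    intro u hu
    have := hganti (Set.mem_Iic.mpr hu) (Set.mem_Iic.mpr le_rfl) hu
    rwa [hg0] at this
  set L : ℝ → ℝ := fun u => Real.log (d u) - p * u - u ^ 2 / 8 with hL_def
  have hL' : ∀ u, HasDerivAt L (g u) u := by
    intro u
    have h1 : HasDerivAt (fun u => Real.log (d u)) (p * Real.exp u / d u) u :=
      (hd' u).log (hd u).ne'
    have h2 : HasDerivAt (fun u : ℝ => p * u) p u := by
      simpa using (hasDerivAt_id u).const_mul p
    have h3 : HasDerivAt (fun u : ℝ => u ^ 2 / 8) (u / 4) u := by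
      have := (hasDerivAt_pow 2 u).div_const 8
      exact this.congr_deriv (by rw [show (2:ℕ) - 1 = 1 from rfl, pow_one]; push_cast; ring)
    have := (h1.sub h2).sub h3
    exact this
  have hLdiff : Differentiable ℝ L := fun u => (hL' u).differentiableAt
  have hLmono : MonotoneOn L (Set.Iic 0) := by
    refine monotoneOn_of_deriv_nonneg (convex_Iic 0) hLdiff.continuous.continuousOn
      (fun x _ => (hLdiff x).differentiableWithinAt) ?_
    intro x hx
    rw [interior_Iic] at hx
    rw [(hL' x).deriv]
    exact hg_nonneg x (le_of_lt hx)
  have hL0 : L 0 = 0 := by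
    have h1 : (1:ℝ) - p + p * Real.exp 0 = 1 := by simp
    simp only [hL_def, hd_def, h1]
    simp
  have hLt : L t ≤ 0 := by
    have := hLmono (Set.mem_Iic.mpr ht) (Set.mem_Iic.mpr le_rfl) ht
    rwa [hL0] at this
  have hlog : Real.log (d t) ≤ t * p + t ^ 2 / 8 := by
    simp only [hL_def] at hLt; nlinarith
  calc 1 - p + p * Real.exp t = d t := rfl
    _ = Real.exp (Real.log (d t)) := (Real.exp_log (hd t)).symm
    _ ≤ Real.exp (t * p + t ^ 2 / 8) := Real.exp_le_exp.mpr hlog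

lemma card_filter_lt_fin {n N : ℕ} (h : N ≤ n) :
    (Finset.univ.filter (fun i : Fin n => (i : ℕ) < N)).card = N := by
  have heq : (Finset.univ.filter (fun i : Fin n => (i : ℕ) < N))
      = Finset.map (Fin.castLEEmb h) Finset.univ := by
    ext i
    simp only [Finset.mem_filter, Finset.mem_univ, true_and, Finset.mem_map]
    constructor
    · intro hi
      exact ⟨⟨(i : ℕ), hi⟩, rfl⟩
    · rintro ⟨j, rfl⟩
      simpa using j.2
  rw [heq, Finset.card_map, Finset.card_univ, Fintype.card_fin]

set_option maxHeartbeats 1000000 in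
/-- Nice-sequence lemma: for i.i.d. random vectors `y₁, …, y_n` with values in `{0,1}^m`,
`p*_k = P(y_{1,k} = 1)` and `γ* = min_k p*_k > 0`, and `n₀` a positive integer dividing
`n` with `n₀² ≥ n`, with probability at least `1 - m n₀ e^{-γ*² n₀ / 2}` the sequence is
`(n₀, γ*/4)`-nice: every running average `(1/t) Σ_{i≤t} y_{i,k}` with `n₀ < t ≤ n` is at
least `γ*/4`. -/
theorem nice_sequence_lemma
    {Ω : Type*} [MeasurableSpace Ω] (μ : Measure Ω) [IsProbabilityMeasure μ]
    (n m : ℕ) (hn : 0 < n) (hm : 0 < m)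
    (y : Fin n → Ω → (Fin m → ℝ))
    (hmeas : ∀ i, Measurable (y i))
    (h01 : ∀ i ω k, y i ω k = 0 ∨ y i ω k = 1)
    (hindep : iIndepFun y μ)
    (hident : ∀ i j : Fin n, Measure.map (y i) μ = Measure.map (y j) μ)
    (p : Fin m → ℝ)
    (hp : ∀ (i : Fin n) (k : Fin m), (μ {ω | y i ω k = 1}).toReal = p k)
    (γ : ℝ) (hγ : γ = ⨅ k, p k) (hγpos : 0 < γ)
    (n₀ : ℕ) (hn₀pos : 0 < n₀) (hn₀dvd : n₀ ∣ n) (hn₀sq : n ≤ n₀ ^ 2) :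
    1 - (m : ℝ) * n₀ * Real.exp (-γ ^ 2 * n₀ / 2) ≤
      (μ {ω | ∀ t : ℕ, n₀ < t → t ≤ n → ∀ k : Fin m,
        γ / 4 ≤ (1 / (t : ℝ)) * ∑ i ∈ Finset.univ.filter (fun i : Fin n => (i : ℕ) < t),
          y i ω k}).toReal := by
  classical
  set X : Fin m → Fin n → Ω → ℝ := fun k i ω => y i ω k with hX_def
  have hXmeas : ∀ k i, Measurable (X k i) := fun k i => (measurable_pi_apply k).comp (hmeas i)
  have hX0 : ∀ k i ω, 0 ≤ X k i ω := by
    intro k i ω; rcases h01 i ω k with h | h <;> simp [hX_def, h]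
  have hpγ : ∀ k, γ ≤ p k := by
    intro k; rw [hγ]; exact ciInf_le (Set.finite_range p).bddBelow k
  have hp0 : ∀ k, 0 ≤ p k := fun k => le_trans hγpos.le (hpγ k)
  have hp1 : ∀ k, p k ≤ 1 := by
    intro k
    rw [← hp ⟨0, hn⟩ k]
    calc (μ {ω | y ⟨0, hn⟩ ω k = 1}).toReal
        ≤ (μ Set.univ).toReal :=
          ENNReal.toReal_mono (measure_ne_top μ _) (measure_mono (Set.subset_univ _))
      _ = 1 := by simp
  have hXindep : ∀ k, iIndepFun (X k) μ := by
    intro k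
    exact hindep.comp (fun i (v : Fin m → ℝ) => v k) (fun i => measurable_pi_apply k)
  -- key per-block Chernoff bound
  have key : ∀ N : ℕ, n₀ ≤ N → N ≤ n → ∀ k : Fin m,
      (μ {ω | ∑ i ∈ Finset.univ.filter (fun i : Fin n => (i : ℕ) < N), y i ω k
        ≤ γ / 2 * N}).toReal ≤ Real.exp (-γ ^ 2 * n₀ / 2) := by
    intro N hN₀ hNn k
    set s : Finset (Fin n) := Finset.univ.filter (fun i : Fin n => (i : ℕ) < N) with hs_def
    have hscard : s.card = N := card_filter_lt_fin hNn
    set S : Ω → ℝ := ∑ i ∈ s, X k i with hS_def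
    have hSfun : S = fun ω => ∑ i ∈ s, X k i ω := by
      funext ω; simp [hS_def, Finset.sum_apply]
    have hSmeas : Measurable S := by
      rw [hSfun]; exact Finset.measurable_sum s (fun i _ => hXmeas k i)
    set δ : ℝ := p k - γ / 2 with hδ_def
    have hδγ : γ / 2 ≤ δ := by have := hpγ k; simp only [hδ_def]; linarith
    have hδpos : 0 < δ := lt_of_lt_of_le (by linarith) hδγ
    set t₀ : ℝ := -(4 * δ) with ht₀_def
    have ht₀ : t₀ ≤ 0 := by simp only [ht₀_def]; linarith
    have hint : Integrable (fun ω => Real.exp (t₀ * S ω)) μ := by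
      refine Integrable.mono' (integrable_const (1 : ℝ))
        ((hSmeas.const_mul t₀).exp.aestronglyMeasurable) ?_
      filter_upwards with ω
      rw [Real.norm_eq_abs, abs_of_nonneg (Real.exp_pos _).le]
      refine Real.exp_le_one_iff.mpr ?_
      have hS0 : 0 ≤ S ω := by
        rw [hSfun]; exact Finset.sum_nonneg fun i _ => hX0 k i ω
      nlinarith
    have hmgf : ∀ i : Fin n, mgf (X k i) μ t₀ = 1 - p k + p k * Real.exp t₀ := by
      intro i
      have hA : MeasurableSet {ω | y i ω k = 1} := by
        have h : {ω | y i ω k = 1} = (X k i) ⁻¹' {1} := rfl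
        rw [h]; exact hXmeas k i (measurableSet_singleton 1)
      have hXeq : X k i = Set.indicator {ω | y i ω k = 1} (fun _ => (1 : ℝ)) := by
        funext ω
        rcases h01 i ω k with h | h
        · have hnm : ω ∉ {ω | y i ω k = 1} := by simp [Set.mem_setOf_eq, h]
          simp [hX_def, h, Set.indicator_of_notMem hnm]
        · have hmem : ω ∈ {ω | y i ω k = 1} := h
          simp [hX_def, h, Set.indicator_of_mem hmem]
      have hXint : Integrable (X k i) μ := by
        rw [hXeq]; exact (integrable_const (1 : ℝ)).indicator hA
      have hEX : ∫ ω, X k i ω ∂μ = p k := by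
        simp only [hXeq]
        rw [MeasureTheory.integral_indicator_const (1 : ℝ) hA, smul_eq_mul, mul_one, measureReal_def, hp i k]
      have hfun : (fun ω => Real.exp (t₀ * X k i ω))
          = fun ω => 1 + (Real.exp t₀ - 1) * X k i ω := by
        funext ω
        rcases h01 i ω k with h | h <;> simp [hX_def, h]
      calc mgf (X k i) μ t₀ = ∫ ω, Real.exp (t₀ * X k i ω) ∂μ := rfl
        _ = ∫ ω, (1 + (Real.exp t₀ - 1) * X k i ω) ∂μ := by rw [hfun]
        _ = 1 + (Real.exp t₀ - 1) * p k := by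
            rw [integral_add (integrable_const 1) (hXint.const_mul _),
              integral_const_mul, hEX]
            simp
        _ = 1 - p k + p k * Real.exp t₀ := by ring
    have hcher := measure_le_le_exp_mul_mgf (μ := μ) (X := S) (t := t₀) (γ / 2 * N) ht₀ hint
    have hmgfS : mgf S μ t₀ ≤ Real.exp ((N : ℝ) * (t₀ * p k + t₀ ^ 2 / 8)) := by
      rw [hS_def, iIndepFun.mgf_sum (hXindep k) (hXmeas k) s]
      calc ∏ i ∈ s, mgf (X k i) μ t₀
          ≤ ∏ i ∈ s, Real.exp (t₀ * p k + t₀ ^ 2 / 8) := by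
            refine Finset.prod_le_prod (fun i _ => mgf_nonneg) (fun i _ => ?_)
            rw [hmgf i]
            exact bernoulli_mgf_bound (hp0 k) (hp1 k) ht₀
        _ = Real.exp (t₀ * p k + t₀ ^ 2 / 8) ^ N := by rw [Finset.prod_const, hscard]
        _ = Real.exp ((N : ℝ) * (t₀ * p k + t₀ ^ 2 / 8)) := by
            rw [← Real.exp_nat_mul]
    have hset : {ω | ∑ i ∈ Finset.univ.filter (fun i : Fin n => (i : ℕ) < N), y i ω k
        ≤ γ / 2 * N} = {ω | S ω ≤ γ / 2 * N} := by
      ext ω; simp [hSfun, hX_def, hs_def]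
    rw [hset]
    refine hcher.trans ?_
    have hstep : Real.exp (-t₀ * (γ / 2 * N)) * mgf S μ t₀
        ≤ Real.exp (-t₀ * (γ / 2 * N)) * Real.exp ((N : ℝ) * (t₀ * p k + t₀ ^ 2 / 8)) :=
      mul_le_mul_of_nonneg_left hmgfS (Real.exp_pos _).le
    refine hstep.trans ?_
    rw [← Real.exp_add]
    refine Real.exp_le_exp.mpr ?_
    have hNn₀ : (n₀ : ℝ) ≤ (N : ℝ) := by exact_mod_cast hN₀
    have hN0 : (0 : ℝ) ≤ (N : ℝ) := Nat.cast_nonneg N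
    have h1 : -t₀ * (γ / 2 * N) + (N : ℝ) * (t₀ * p k + t₀ ^ 2 / 8)
        = -(2 * δ ^ 2) * N := by
      simp only [ht₀_def, hδ_def]; ring
    rw [h1]
    have h2 : γ ^ 2 / 2 ≤ 2 * δ ^ 2 := by nlinarith
    have h3 : (0:ℝ) ≤ γ ^ 2 := sq_nonneg γ
    calc -(2 * δ ^ 2) * (N : ℝ) ≤ -(γ ^ 2 / 2) * N := by nlinarith
      _ ≤ -(γ ^ 2 / 2) * n₀ := by nlinarith
      _ = -γ ^ 2 * n₀ / 2 := by ring
  -- union bound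
  set Q : ℕ := n / n₀ with hQ_def
  have hQn : Q * n₀ = n := Nat.div_mul_cancel hn₀dvd
  have hQle : Q ≤ n₀ := by
    have h' : n ≤ n₀ * n₀ := by rw [← pow_two]; exact hn₀sq
    exact Nat.le_of_mul_le_mul_right (hQn ▸ h') hn₀pos
  set Bad : ℕ → Fin m → Set Ω := fun j k =>
    {ω | ∑ i ∈ Finset.univ.filter (fun i : Fin n => (i : ℕ) < j * n₀), y i ω k
      ≤ γ / 2 * ((j * n₀ : ℕ) : ℝ)} with hBad_def
  have hBadmeas : ∀ j k, MeasurableSet (Bad j k) := by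
    intro j k
    have hm' : Measurable fun ω =>
        ∑ i ∈ Finset.univ.filter (fun i : Fin n => (i : ℕ) < j * n₀), y i ω k :=
      Finset.measurable_sum _ (fun i _ => (measurable_pi_apply k).comp (hmeas i))
    exact measurableSet_le hm' measurable_const
  set U : Set Ω := ⋃ j ∈ Finset.Icc 1 Q, ⋃ k ∈ (Finset.univ : Finset (Fin m)), Bad j k
    with hU_def
  have hUmeas : MeasurableSet U := by
    refine MeasurableSet.biUnion (Finset.Icc 1 Q).countable_toSet (fun j _ => ?_)
    exact MeasurableSet.biUnion Finset.univ.countable_toSet (fun k _ => hBadmeas j k)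
  have hUbound : (μ U).toReal ≤ (m : ℝ) * n₀ * Real.exp (-γ ^ 2 * n₀ / 2) := by
    have h1 : μ U ≤ ∑ j ∈ Finset.Icc 1 Q, ∑ k ∈ (Finset.univ : Finset (Fin m)), μ (Bad j k) := by
      refine (measure_biUnion_finset_le _ _).trans ?_
      exact Finset.sum_le_sum fun j _ => measure_biUnion_finset_le _ _
    have hfin : (∑ j ∈ Finset.Icc 1 Q, ∑ k ∈ (Finset.univ : Finset (Fin m)), μ (Bad j k)) ≠ ⊤ := by
      refine (ENNReal.sum_lt_top.mpr fun j _ => ?_).ne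
      exact (ENNReal.sum_lt_top.mpr fun k _ => measure_lt_top μ _)
    have h2 : (μ U).toReal
        ≤ ∑ j ∈ Finset.Icc 1 Q, ∑ k ∈ (Finset.univ : Finset (Fin m)), (μ (Bad j k)).toReal := by
      refine (ENNReal.toReal_mono hfin h1).trans_eq ?_
      rw [ENNReal.toReal_sum (fun j _ => ?_)]
      · exact Finset.sum_congr rfl fun j _ =>
          ENNReal.toReal_sum fun k _ => measure_ne_top μ _
      · exact (ENNReal.sum_lt_top.mpr fun k _ => measure_lt_top μ _).ne
    have h3 : ∀ j ∈ Finset.Icc 1 Q, ∀ k : Fin m,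
        (μ (Bad j k)).toReal ≤ Real.exp (-γ ^ 2 * n₀ / 2) := by
      intro j hj k
      rw [Finset.mem_Icc] at hj
      have hj1 : n₀ ≤ j * n₀ := Nat.le_mul_of_pos_left n₀ hj.1
      have hj2 : j * n₀ ≤ n := by
        rw [← hQn]; exact Nat.mul_le_mul_right n₀ hj.2
      exact key (j * n₀) hj1 hj2 k
    have hcard : (Finset.Icc 1 Q).card = Q := by rw [Nat.card_Icc, Nat.add_sub_cancel]
    calc (μ U).toReal
        ≤ ∑ j ∈ Finset.Icc 1 Q, ∑ k ∈ (Finset.univ : Finset (Fin m)), (μ (Bad j k)).toReal := h2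
      _ ≤ ∑ j ∈ Finset.Icc 1 Q, ∑ _k ∈ (Finset.univ : Finset (Fin m)),
            Real.exp (-γ ^ 2 * n₀ / 2) :=
          Finset.sum_le_sum fun j hj => Finset.sum_le_sum fun k _ => h3 j hj k
      _ = (Q : ℝ) * ((m : ℝ) * Real.exp (-γ ^ 2 * n₀ / 2)) := by
          rw [Finset.sum_const, Finset.sum_const, Finset.card_univ, Fintype.card_fin, hcard]
          push_cast [nsmul_eq_mul]
          ring
      _ ≤ (m : ℝ) * n₀ * Real.exp (-γ ^ 2 * n₀ / 2) := by
          have hQr : (Q : ℝ) ≤ (n₀ : ℝ) := by exact_mod_cast hQle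
          have he : (0 : ℝ) ≤ Real.exp (-γ ^ 2 * n₀ / 2) := (Real.exp_pos _).le
          have hm' : (0 : ℝ) ≤ (m : ℝ) := Nat.cast_nonneg m
          calc (Q : ℝ) * ((m : ℝ) * Real.exp (-γ ^ 2 * n₀ / 2))
              ≤ (n₀ : ℝ) * ((m : ℝ) * Real.exp (-γ ^ 2 * n₀ / 2)) :=
                mul_le_mul_of_nonneg_right hQr (mul_nonneg hm' he)
            _ = (m : ℝ) * n₀ * Real.exp (-γ ^ 2 * n₀ / 2) := by ring
  have hsub : Uᶜ ⊆ {ω | ∀ t : ℕ, n₀ < t → t ≤ n → ∀ k : Fin m,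
      γ / 4 ≤ (1 / (t : ℝ)) * ∑ i ∈ Finset.univ.filter (fun i : Fin n => (i : ℕ) < t),
        y i ω k} := by
    intro ω hω
    have hnb : ∀ j, 1 ≤ j → j ≤ Q → ∀ k' : Fin m, ω ∉ Bad j k' := by
      intro j hj1 hj2 k' hmem
      apply hω
      refine Set.mem_biUnion (Finset.mem_coe.mpr (Finset.mem_Icc.mpr ⟨hj1, hj2⟩)) ?_
      exact Set.mem_biUnion (Finset.mem_coe.mpr (Finset.mem_univ k')) hmem
    intro t ht₁ ht₂ k
    set j : ℕ := t / n₀ with hj_def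
    have hj1 : 1 ≤ j := (Nat.one_le_div_iff hn₀pos).mpr ht₁.le
    have hjQ : j ≤ Q := Nat.div_le_div_right ht₂
    have hjt : j * n₀ ≤ t := by
      rw [hj_def]; exact Nat.div_mul_le_self t n₀
    have hmod := Nat.div_add_mod t n₀
    have hmodlt : t % n₀ < n₀ := Nat.mod_lt t hn₀pos
    have hn₀j : n₀ ≤ j * n₀ := Nat.le_mul_of_pos_left n₀ hj1
    have ht2j : t < 2 * (j * n₀) := by
      calc t = n₀ * j + t % n₀ := by rw [hj_def]; exact hmod.symm
        _ < n₀ * j + n₀ := Nat.add_lt_add_left hmodlt _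
        _ ≤ n₀ * j + j * n₀ := Nat.add_le_add_left hn₀j _
        _ = 2 * (j * n₀) := by ring
    have hnotbad := hnb j hj1 hjQ k
    simp only [hBad_def, Set.mem_setOf_eq, not_le] at hnotbad
    have hsum_mono : ∑ i ∈ Finset.univ.filter (fun i : Fin n => (i : ℕ) < j * n₀), y i ω k
        ≤ ∑ i ∈ Finset.univ.filter (fun i : Fin n => (i : ℕ) < t), y i ω k := by
      refine Finset.sum_le_sum_of_subset_of_nonneg ?_ ?_
      · intro i hi
        simp only [Finset.mem_filter, Finset.mem_univ, true_and] at hi ⊢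
        omega
      · intro i _ _
        rcases h01 i ω k with h | h <;> simp [h]
    have htpos : (0 : ℝ) < (t : ℝ) := by
      have : 0 < t := lt_trans hn₀pos ht₁
      exact_mod_cast this
    rw [one_div, inv_mul_eq_div, le_div_iff₀ htpos]
    have h2jr : (t : ℝ) ≤ 2 * ((j * n₀ : ℕ) : ℝ) := by exact_mod_cast ht2j.le
    have hjn0 : (0 : ℝ) ≤ ((j * n₀ : ℕ) : ℝ) := Nat.cast_nonneg _
    nlinarith [hnotbad, hsum_mono]
  have hUc : (μ Uᶜ).toReal = 1 - (μ U).toReal := by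
    rw [measure_compl hUmeas (measure_ne_top μ U), measure_univ,
      ENNReal.toReal_sub_of_le prob_le_one ENNReal.one_ne_top, ENNReal.toReal_one]
  calc 1 - (m : ℝ) * n₀ * Real.exp (-γ ^ 2 * n₀ / 2)
      ≤ 1 - (μ U).toReal := by linarith
    _ = (μ Uᶜ).toReal := hUc.symm
    _ ≤ _ := ENNReal.toReal_mono (measure_ne_top μ _) (measure_mono hsub)
end
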